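/- On ℝⁿ (n ≥ 2) with constant μ ∈ ℝ, on the open set where 1+μ|x|² > 0, the vector field W(x) = √(1+μ|x|²)·(λx + a) (with λ ∈ ℝ, a ∈ ℝⁿ constants) is a conformal vector field of the Riemannian metric h given by h(x,y)² = ((1+μ|x|²)|y|² − μ⟨x,y⟩²)/(1+μ|x|²)², i.e. the Lie derivative of the metric tensor along W is a scalar function times the metric tensor. -/

import Mathlib

set_option maxHeartbeats 1000000

noncomputable def pr {n : ℕ} (m : Fin n) : (Fin n → ℝ) →L[ℝ] ℝ := ContinuousLinearMap.proj m

lemma pr_apply {n : ℕ} (m : Fin n) (v : Fin n → ℝ) : pr m v = v m := rfl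

lemma hasFDerivAt_pr {n : ℕ} (m : Fin n) (x : Fin n → ℝ) :
    HasFDerivAt (fun y : Fin n → ℝ => y m) (pr m) x :=
  hasFDerivAt_apply m x

lemma hasFDerivAt_sq' {n : ℕ} (m : Fin n) (x : Fin n → ℝ) :
    HasFDerivAt (fun y : Fin n → ℝ => y m ^ 2) ((2 * x m) • pr m) x := by
  have e : (fun y : Fin n → ℝ => y m ^ 2) = fun y => y m * y m := by funext y; ring
  rw [e]
  refine ((hasFDerivAt_pr m x).fun_mul (hasFDerivAt_pr m x)).congr_fderiv ?_
  module

lemma hasFDerivAt_q {n : ℕ} (μ : ℝ) (x : Fin n → ℝ) :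
    HasFDerivAt (fun y : Fin n → ℝ => 1 + μ * ∑ m, y m ^ 2)
      (∑ m, (2 * μ * x m) • pr m) x := by
  have h1 : HasFDerivAt (fun y : Fin n → ℝ => ∑ m, y m ^ 2)
      (∑ m, (2 * x m) • pr m) x := HasFDerivAt.fun_sum fun m _ => hasFDerivAt_sq' m x
  have h2 := (h1.const_mul μ).const_add 1
  refine h2.congr_fderiv ?_
  rw [Finset.smul_sum]
  congr 1; funext m
  rw [smul_smul]; ring_nf

lemma q_dir {n : ℕ} (μ : ℝ) (x : Fin n → ℝ) (k : Fin n) :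
    (∑ m, (2 * μ * x m) • pr m) (Pi.single k 1) = 2 * μ * x k := by
  simp only [ContinuousLinearMap.sum_apply, ContinuousLinearMap.smul_apply, pr_apply,
    Pi.single_apply, smul_eq_mul, mul_ite, mul_one, mul_zero]
  simp [Finset.sum_ite_eq]

lemma fderiv_W_apply {n : ℕ} (μ lam : ℝ) (x : Fin n → ℝ)
    (hq : 0 < 1 + μ * ∑ m, x m ^ 2) (b : ℝ) (k i : Fin n) :
    fderiv ℝ (fun y : Fin n → ℝ => Real.sqrt (1 + μ * ∑ m, y m ^ 2) * (lam * y k + b)) x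
      (Pi.single i 1)
    = Real.sqrt (1 + μ * ∑ m, x m ^ 2) * lam * (if i = k then 1 else 0)
      + (lam * x k + b) * (1 / (2 * Real.sqrt (1 + μ * ∑ m, x m ^ 2)) * (2 * μ * x i)) := by
  have hsqrt : HasFDerivAt (fun y : Fin n → ℝ => Real.sqrt (1 + μ * ∑ m, y m ^ 2))
      ((1 / (2 * Real.sqrt (1 + μ * ∑ m, x m ^ 2))) • ∑ m, (2 * μ * x m) • pr m) x :=
    (Real.hasDerivAt_sqrt hq.ne').comp_hasFDerivAt x (hasFDerivAt_q μ x)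
  have hlin : HasFDerivAt (fun y : Fin n → ℝ => lam * y k + b) (lam • pr k) x := by
    exact ((hasFDerivAt_pr k x).const_mul lam).add_const b
  rw [(hsqrt.fun_mul hlin).fderiv]
  simp only [ContinuousLinearMap.add_apply, ContinuousLinearMap.smul_apply, pr_apply,
    q_dir, smul_eq_mul, Pi.single_apply]
  by_cases h : i = k
  · simp [h]
  · simp [h, if_neg (Ne.symm h)]

lemma fderiv_g_apply {n : ℕ} (μ : ℝ) (x : Fin n → ℝ)
    (hq : 0 < 1 + μ * ∑ m, x m ^ 2) (i j k : Fin n) :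
    fderiv ℝ (fun y : Fin n → ℝ =>
        ((1 + μ * ∑ m, y m ^ 2) * (if i = j then 1 else 0) - μ * y i * y j) /
          (1 + μ * ∑ m, y m ^ 2) ^ 2) x (Pi.single k 1)
    = (2 * μ * x k * (if i = j then 1 else 0)
        - μ * ((if i = k then 1 else 0) * x j + x i * (if j = k then 1 else 0))) /
          (1 + μ * ∑ m, x m ^ 2) ^ 2
      - ((1 + μ * ∑ m, x m ^ 2) * (if i = j then 1 else 0) - μ * x i * x j)
          * (4 * μ * x k) / (1 + μ * ∑ m, x m ^ 2) ^ 3 := by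
  set q : ℝ := 1 + μ * ∑ m, x m ^ 2 with hqdef
  have hq0 : q ≠ 0 := hq.ne'
  have hqd := hasFDerivAt_q μ x
  set d : ℝ := if i = j then 1 else 0 with hd
  have hNum : HasFDerivAt (fun y : Fin n → ℝ =>
      (1 + μ * ∑ m, y m ^ 2) * d - μ * y i * y j)
      (d • (∑ m, (2 * μ * x m) • pr m) - μ • (x i • pr j + x j • pr i)) x := by
    have h1 := hqd.mul_const d
    have h2 := ((hasFDerivAt_pr i x).mul (hasFDerivAt_pr j x)).const_mul μ
    have e : (fun y : Fin n → ℝ => (1 + μ * ∑ m, y m ^ 2) * d - μ * y i * y j)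
        = fun y => (1 + μ * ∑ m, y m ^ 2) * d - μ * (y i * y j) := by
      funext y; ring
    rw [e]
    exact h1.sub h2
  have hDen : HasFDerivAt (fun y : Fin n → ℝ => (1 + μ * ∑ m, y m ^ 2) ^ 2)
      ((2 * q) • (∑ m, (2 * μ * x m) • pr m)) x := by
    have e : (fun y : Fin n → ℝ => (1 + μ * ∑ m, y m ^ 2) ^ 2)
        = fun y => (1 + μ * ∑ m, y m ^ 2) * (1 + μ * ∑ m, y m ^ 2) := by
      funext y; ring
    rw [e]
    refine (hqd.fun_mul hqd).congr_fderiv ?_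
    rw [← hqdef]; module
  have hq20 : q ^ 2 ≠ 0 := pow_ne_zero 2 hq0
  have hinv := (hasDerivAt_inv hq20).comp_hasFDerivAt x hDen
  have htot := hNum.fun_mul hinv
  have e : (fun y : Fin n → ℝ =>
      ((1 + μ * ∑ m, y m ^ 2) * d - μ * y i * y j) / (1 + μ * ∑ m, y m ^ 2) ^ 2)
      = fun y => ((1 + μ * ∑ m, y m ^ 2) * d - μ * (y i) * (y j)) *
          ((1 + μ * ∑ m, y m ^ 2) ^ 2)⁻¹ := by
    funext y; rw [div_eq_mul_inv]
  simp only [Function.comp_def] at htot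
  rw [e, htot.fderiv]
  simp only [ContinuousLinearMap.add_apply, ContinuousLinearMap.smul_apply,
    ContinuousLinearMap.sub_apply, q_dir, pr_apply, Pi.single_apply, smul_eq_mul]
  rw [← hqdef]
  field_simp
  ring

lemma sA {n : ℕ} (i : Fin n) (f : Fin n → ℝ) :
    ∑ k, f k * (if i = k then 1 else 0) = f i := by
  simp [mul_ite, Finset.sum_ite_eq]

lemma sB {n : ℕ} (i j : Fin n) :
    ∑ k, (if i = k then (1:ℝ) else 0) * (if j = k then 1 else 0)
      = if i = j then 1 else 0 := by
  have h : ∀ k : Fin n, (if i = k then (1:ℝ) else 0) * (if j = k then 1 else 0)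
      = if i = k then (if j = k then 1 else 0) else 0 := fun k => by
    by_cases h : i = k <;> simp [h]
  simp only [h, Finset.sum_ite_eq, Finset.mem_univ, if_true]
  simp [eq_comm]

lemma sum_comb {n : ℕ} (i j : Fin n) (A B C D E G : ℝ) (u v : Fin n → ℝ) :
    ∑ k, (A * (u k * v k) + B * (u k * (if i = k then 1 else 0))
        + C * (u k * (if j = k then 1 else 0))
        + D * ((if i = k then 1 else 0) * (if j = k then 1 else 0))
        + E * (v k * (if i = k then 1 else 0))
        + G * (v k * (if j = k then 1 else 0)))
    = A * (∑ k, u k * v k) + B * u i + C * u j + D * (if i = j then 1 else 0)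
      + E * v i + G * v j := by
  simp only [Finset.sum_add_distrib, ← Finset.mul_sum, sA, sB]

open Finset in
theorem conformal_vector_field_constant_curvature
    (n : ℕ) (hn : 2 ≤ n) (μ lam : ℝ) (a : Fin n → ℝ) :
    let normsq : (Fin n → ℝ) → ℝ := fun x => ∑ i, x i ^ 2
    let g : (Fin n → ℝ) → Fin n → Fin n → ℝ := fun x i j =>
      ((1 + μ * normsq x) * (if i = j then 1 else 0) - μ * x i * x j) /
        (1 + μ * normsq x) ^ 2
    let W : (Fin n → ℝ) → Fin n → ℝ := fun x i =>
      Real.sqrt (1 + μ * normsq x) * (lam * x i + a i)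
    ∃ c : (Fin n → ℝ) → ℝ, ∀ x : Fin n → ℝ, 1 + μ * normsq x > 0 →
      ∀ i j : Fin n,
        (∑ k, W x k * fderiv ℝ (fun y => g y i j) x (Pi.single k 1))
          + (∑ k, g x k j * fderiv ℝ (fun y => W y k) x (Pi.single i 1))
          + (∑ k, g x i k * fderiv ℝ (fun y => W y k) x (Pi.single j 1))
        = c x * g x i j := by
  intro normsq g W
  refine ⟨fun x => 2 * (lam - μ * ∑ m, a m * x m) / Real.sqrt (1 + μ * ∑ m, x m ^ 2), ?_⟩
  intro x hx i j
  simp only [normsq, g, W] at hx ⊢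
  have hq : (0:ℝ) < 1 + μ * ∑ m, x m ^ 2 := hx
  simp only [fderiv_g_apply μ x hq i j, fderiv_W_apply μ lam x hq]
  set S := ∑ m, x m ^ 2 with hS
  set T := ∑ m, a m * x m with hT
  set s := Real.sqrt (1 + μ * S) with hsdef
  have hs2 : s ^ 2 = 1 + μ * S := Real.sq_sqrt hq.le
  have hs0 : s ≠ 0 := (Real.sqrt_pos.mpr hq).ne'
  have hP : (∑ k, (lam * x k + a k) * x k) = lam * S + T := by
    rw [hS, hT, Finset.mul_sum, ← Finset.sum_add_distrib]
    exact Finset.sum_congr rfl fun k _ => by ring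
  have h1 : ∑ k : Fin n,
      s * (lam * x k + a k) *
        (((2 * μ * x k * if i = j then 1 else 0) -
              μ * ((if i = k then 1 else 0) * x j + x i * if j = k then 1 else 0)) /
            (1 + μ * S) ^ 2 -
          (((1 + μ * S) * if i = j then 1 else 0) - μ * x i * x j) * (4 * μ * x k) /
            (1 + μ * S) ^ 3)
      = ∑ k : Fin n,
        ((s * (2 * μ * (if i = j then 1 else 0)) / (1 + μ * S) ^ 2
            - s * (((1 + μ * S) * (if i = j then 1 else 0)) - μ * x i * x j) * (4 * μ) /
                (1 + μ * S) ^ 3) * ((lam * x k + a k) * x k)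
          + (-(s * μ * x j / (1 + μ * S) ^ 2)) * ((lam * x k + a k) * (if i = k then 1 else 0))
          + (-(s * μ * x i / (1 + μ * S) ^ 2)) * ((lam * x k + a k) * (if j = k then 1 else 0))
          + 0 * ((if i = k then 1 else 0) * (if j = k then 1 else 0))
          + 0 * (x k * (if i = k then 1 else 0))
          + 0 * (x k * (if j = k then 1 else 0))) :=
    Finset.sum_congr rfl fun k _ => by ring
  have h2 : ∑ k : Fin n,
      (((1 + μ * S) * if k = j then 1 else 0) - μ * x k * x j) / (1 + μ * S) ^ 2 *
        ((s * lam * if i = k then 1 else 0) + (lam * x k + a k) * (1 / (2 * s) * (2 * μ * x i)))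
      = ∑ k : Fin n,
        ((-(μ * x j / (1 + μ * S) ^ 2) * (1 / (2 * s) * (2 * μ * x i))) * ((lam * x k + a k) * x k)
          + 0 * ((lam * x k + a k) * (if i = k then 1 else 0))
          + ((1 + μ * S) * (1 / (2 * s) * (2 * μ * x i)) / (1 + μ * S) ^ 2) *
              ((lam * x k + a k) * (if j = k then 1 else 0))
          + ((1 + μ * S) * s * lam / (1 + μ * S) ^ 2) *
              ((if i = k then 1 else 0) * (if j = k then 1 else 0))
          + (-(μ * x j * s * lam / (1 + μ * S) ^ 2)) * (x k * (if i = k then 1 else 0))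
          + 0 * (x k * (if j = k then 1 else 0))) :=
    Finset.sum_congr rfl fun k _ => by
      rw [if_congr (eq_comm (a := k) (b := j)) rfl rfl]; ring
  have h3 : ∑ k : Fin n,
      (((1 + μ * S) * if i = k then 1 else 0) - μ * x i * x k) / (1 + μ * S) ^ 2 *
        ((s * lam * if j = k then 1 else 0) + (lam * x k + a k) * (1 / (2 * s) * (2 * μ * x j)))
      = ∑ k : Fin n,
        ((-(μ * x i / (1 + μ * S) ^ 2) * (1 / (2 * s) * (2 * μ * x j))) * ((lam * x k + a k) * x k)
          + ((1 + μ * S) * (1 / (2 * s) * (2 * μ * x j)) / (1 + μ * S) ^ 2) *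
              ((lam * x k + a k) * (if i = k then 1 else 0))
          + 0 * ((lam * x k + a k) * (if j = k then 1 else 0))
          + ((1 + μ * S) * s * lam / (1 + μ * S) ^ 2) *
              ((if i = k then 1 else 0) * (if j = k then 1 else 0))
          + 0 * (x k * (if i = k then 1 else 0))
          + (-(μ * x i * s * lam / (1 + μ * S) ^ 2)) * (x k * (if j = k then 1 else 0))) :=
    Finset.sum_congr rfl fun k _ => by ring
  rw [h1, h2, h3, sum_comb, sum_comb, sum_comb, hP]
  set d : ℝ := if i = j then (1:ℝ) else 0 with hd
  have hspos : (0:ℝ) < s := Real.sqrt_pos.mpr hq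
  clear_value S T s d
  by_cases hmu : μ = 0
  · subst hmu
    have hs1 : s = 1 := by nlinarith [hs2]
    rw [hs1]
    field_simp
    ring
  · have hSval : S = (s ^ 2 - 1) / μ := by
      rw [hs2]; field_simp; ring
    rw [hSval]
    field_simp
    ring
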